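/- arXiv:1304.5024 — 2 statements merged into one kernel-verified Lean document; each statement's English description precedes it below -/
import Mathlib

section
/- The map Φ : 𝔤^k → G_k(𝔤) defined by Φ(x_1, …, x_k)_α = x_{|α|} (for α ∈ I_k^*, where |α| is the cardinality of α) is an injective homomorphism from J_k(𝔤) to G_k(𝔤) with respect to the multiplications defined in the context, i.e. Φ(x·y) = Φ(x)·Φ(y) for all x, y ∈ 𝔤^k, and its image is exactly the set of families (x_α)_{α ∈ I_k^*} with x_α = x_β whenever |α| = |β| (equivalently, the fixed point set of the action of the symmetric group S_k permuting the index subsets). In particular this fixed point set is a subgroup of G_k(𝔤) isomorphic to J_k(𝔤). -/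
/-- `Ncoef [i₁, …, i_ℓ] = C(i₁+⋯+i_ℓ−1, i_ℓ−1) ⋯ C(i₁+i₂−1, i₂−1)`,
with the empty product (ℓ ≤ 1) equal to 1. -/
def Ncoef : List ℕ → ℕ
  | [] => 1
  | [_] => 1
  | i :: j :: rest => Nat.choose (i + j - 1) (j - 1) * Ncoef ((i + j) :: rest)
termination_by l => l.length

/-- A list `L = (λ₁, …, λ_ℓ)` of pairwise disjoint nonempty finite subsets of `ℕ`
whose union is `S` is an *anti-lexicographically ordered partition* of `S` if for
every `r` the maximum of `λ₁ ∪ ⋯ ∪ λ_r` belongs to `λ_r`. -/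
def IsALOP (S : Finset ℕ) (L : List (Finset ℕ)) : Prop :=
  (∀ B ∈ L, B.Nonempty) ∧ List.Pairwise Disjoint L ∧
    L.foldr (· ∪ ·) ∅ = S ∧
    ∀ r, (hr : r < L.length) → ∃ m ∈ L.get ⟨r, hr⟩,
      ∀ a ∈ (L.take (r + 1)).foldr (· ∪ ·) ∅, a ≤ m

section Defs

variable {R : Type*} [CommRing R] {𝔤 : Type*} [LieRing 𝔤] [LieAlgebra R 𝔤]

/-- Extend a `k`-tuple `(x_1, …, x_k)` (with slot `n` stored at index `n-1`) to a
function on `ℕ`, by `0` outside `{1, …, k}`. -/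
def extX (k : ℕ) (x : Fin k → 𝔤) : ℕ → 𝔤 :=
  fun n => if h : 1 ≤ n ∧ n ≤ k then x ⟨n - 1, by omega⟩ else 0

/-- The `n`-th component of the product on `J_k(𝔤)`:
`z_n = x_n + Σ_{ℓ} Σ_{i₁+⋯+i_ℓ=n} N_{(i₁,…,i_ℓ)} ad_{x_{i_{ℓ−1}}} ⋯ ad_{x_{i₁}} y_{i_ℓ}`. -/
def jetZ (x y : ℕ → 𝔤) (n : ℕ) : 𝔤 :=
  x n + ∑ c : Composition n,
    Ncoef c.blocks •
      (c.blocks.dropLast.foldl (fun v i => ⁅x i, v⁆) (y (c.blocks.getLast?.getD 0)))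

/-- The multiplication on `J_k(𝔤) = 𝔤^k`. -/
def jMul (k : ℕ) (x y : Fin k → 𝔤) : Fin k → 𝔤 :=
  fun j => jetZ (extX k x) (extX k y) (j.val + 1)

/-- The index set `I_k^*` of nonempty subsets of `{1, …, k}`. -/
def Ik (k : ℕ) : Type :=
  {α : Finset ℕ // α ⊆ Finset.Icc 1 k ∧ α.Nonempty}

/-- Extend a family indexed by `I_k^*` to all finite subsets of `ℕ`, by `0`. -/
def extF (k : ℕ) (x : Ik k → 𝔤) : Finset ℕ → 𝔤 :=
  fun α => if h : α ⊆ Finset.Icc 1 k ∧ α.Nonempty then x ⟨α, h⟩ else 0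

/-- The `α`-component of the product on `G_k(𝔤)` :
`x_α + Σ_λ ad_{x_{λ_{ℓ−1}}} ⋯ ad_{x_{λ₁}} y_{λ_ℓ}`, summed over all
anti-lexicographically ordered partitions `λ` of `α`. -/
noncomputable def tanZ (x y : Finset ℕ → 𝔤) (α : Finset ℕ) : 𝔤 :=
  x α + ∑ᶠ (L : List (Finset ℕ)) (_ : IsALOP α L),
    L.dropLast.foldl (fun v B => ⁅x B, v⁆) (y (L.getLast?.getD ∅))

/-- The multiplication on `G_k(𝔤)`. -/
noncomputable def tanMul (k : ℕ) (x y : Ik k → 𝔤) : Ik k → 𝔤 :=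
  fun α => tanZ (extF k x) (extF k y) α.1

/-- The map `Φ : J_k(𝔤) → G_k(𝔤)`, `Φ(x₁, …, x_k)_α = x_{|α|}`. -/
def Phi (k : ℕ) (x : Fin k → 𝔤) : Ik k → 𝔤 :=
  fun α => extX k x α.1.card

end Defs


/-! ### Auxiliary machinery -/

lemma Ncoef_append (l : List ℕ) (i : ℕ) :
    Ncoef (l ++ [i]) = Nat.choose (l.sum + i - 1) (i - 1) * Ncoef l := by
  induction l using Ncoef.induct with
  | case1 => simp [Ncoef]
  | case2 a => simp [Ncoef]
  | case3 a b rest ih =>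
      show Ncoef (a :: b :: (rest ++ [i])) = _
      rw [Ncoef]
      have : (a + b) :: (rest ++ [i]) = ((a+b) :: rest) ++ [i] := by simp
      rw [this, ih, Ncoef]
      have hs : ((a+b) :: rest).sum = (a :: b :: rest).sum := by simp; ring
      rw [hs]; ring

/-- Compositions of `n` as a finset of lists. -/
noncomputable def compsF (n : ℕ) : Finset (List ℕ) :=
  Finset.univ.image (Composition.blocks : Composition n → List ℕ)

lemma mem_compsF {n : ℕ} {l : List ℕ} :
    l ∈ compsF n ↔ (∀ i ∈ l, 0 < i) ∧ l.sum = n := by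
  constructor
  · rintro h
    simp only [compsF, Finset.mem_image] at h
    obtain ⟨c, -, rfl⟩ := h
    exact ⟨fun i hi => c.blocks_pos hi, c.blocks_sum⟩
  · rintro ⟨h1, h2⟩
    simp only [compsF, Finset.mem_image]
    exact ⟨⟨l, fun {i} hi => h1 i hi, h2⟩, Finset.mem_univ _, rfl⟩

lemma sum_compsF {M : Type*} [AddCommMonoid M] (n : ℕ) (f : List ℕ → M) :
    ∑ c : Composition n, f c.blocks = ∑ l ∈ compsF n, f l := by
  rw [compsF, Finset.sum_image]
  intro x _ y _ h
  exact Composition.ext h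

lemma compsF_zero : compsF 0 = {[]} := by
  ext l
  rw [mem_compsF, Finset.mem_singleton]
  constructor
  · rintro ⟨h1, h2⟩
    cases l with
    | nil => rfl
    | cons a t =>
        have := h1 a (List.mem_cons_self)
        simp only [List.sum_cons] at h2
        omega
  · rintro rfl; simp

/-- Peeling the last block off a composition. -/
lemma sum_compsF_succ {M : Type*} [AddCommMonoid M] (n : ℕ) (hn : 1 ≤ n) (f : List ℕ → M) :
    ∑ l ∈ compsF n, f l
      = ∑ i ∈ Finset.Icc 1 n, ∑ l ∈ compsF (n - i), f (l ++ [i]) := by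
  have key : ∑ p ∈ (Finset.Icc 1 n).sigma (fun i => compsF (n - i)), f (p.2 ++ [p.1])
      = ∑ l ∈ compsF n, f l := by
    apply Finset.sum_nbij' (i := fun p => p.2 ++ [p.1])
      (j := fun l => ⟨l.getLast?.getD 0, l.dropLast⟩)
    · rintro ⟨i, l⟩ hp
      rw [Finset.mem_sigma] at hp
      obtain ⟨hi, hl⟩ := hp
      rw [mem_compsF] at hl ⊢
      rw [Finset.mem_Icc] at hi
      dsimp only at hi hl ⊢
      constructor
      · intro j hj
        rw [List.mem_append] at hj
        rcases hj with h | h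
        · exact hl.1 j h
        · simp only [List.mem_singleton] at h; omega
      · have := hl.2
        simp only [List.sum_append, List.sum_cons, List.sum_nil]
        omega
    · intro l hl
      rw [mem_compsF] at hl
      have hne : l ≠ [] := by
        rintro rfl
        simp at hl; omega
      rw [Finset.mem_sigma]
      have hlast : l.getLast?.getD 0 = l.getLast hne := by
        rw [List.getLast?_eq_getLast hne]; rfl
      have hmem : l.getLast hne ∈ l := List.getLast_mem hne
      have hpos : 0 < l.getLast hne := hl.1 _ hmem
      have hsum : l.dropLast.sum + l.getLast hne = n := by
        conv_rhs => rw [← hl.2, ← List.dropLast_concat_getLast hne]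
        simp
      dsimp only
      constructor
      · rw [Finset.mem_Icc, hlast]
        omega
      · rw [mem_compsF]
        refine ⟨fun i hi => hl.1 i (List.mem_of_mem_dropLast hi), ?_⟩
        rw [hlast]; omega
    · rintro ⟨i, l⟩ hp
      rw [Finset.mem_sigma, Finset.mem_Icc] at hp
      dsimp only
      congr 1
      · simp
      · simp
    · intro l hl
      rw [mem_compsF] at hl
      have hne : l ≠ [] := by
        rintro rfl; simp at hl; omega
      dsimp only
      rw [List.getLast?_eq_getLast hne]
      exact List.dropLast_concat_getLast hne
    · intros; rfl
  rw [← key, Finset.sum_sigma]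

/-! ### Foldr-union helper lemmas -/

lemma foldr_union_init (L : List (Finset ℕ)) (s : Finset ℕ) :
    L.foldr (· ∪ ·) s = L.foldr (· ∪ ·) ∅ ∪ s := by
  induction L with
  | nil => simp
  | cons B t ih => simp [List.foldr_cons, ih, Finset.union_assoc]

lemma subset_foldr_union {L : List (Finset ℕ)} {B : Finset ℕ} (h : B ∈ L) :
    B ⊆ L.foldr (· ∪ ·) ∅ := by
  induction L with
  | nil => simp at h
  | cons C t ih =>
      rcases List.mem_cons.1 h with rfl | h
      · exact Finset.subset_union_left
      · exact (ih h).trans Finset.subset_union_right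

lemma disjoint_foldr_union {L : List (Finset ℕ)} {B : Finset ℕ}
    (h : ∀ C ∈ L, Disjoint C B) : Disjoint (L.foldr (· ∪ ·) ∅) B := by
  induction L with
  | nil => simp
  | cons C t ih =>
      simp only [List.foldr_cons, Finset.disjoint_union_left]
      exact ⟨h C (List.mem_cons_self), ih (fun D hD => h D (List.mem_cons_of_mem _ hD))⟩

lemma foldr_union_concat (L : List (Finset ℕ)) (B : Finset ℕ) :
    (L ++ [B]).foldr (· ∪ ·) ∅ = L.foldr (· ∪ ·) ∅ ∪ B := by
  rw [List.foldr_append, List.foldr_cons, List.foldr_nil, Finset.union_empty,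
    foldr_union_init]

/-! ### Structure of ALOPs -/

lemma isALOP_empty_iff (L : List (Finset ℕ)) : IsALOP ∅ L ↔ L = [] := by
  constructor
  · rintro ⟨h1, -, h3, -⟩
    cases L with
    | nil => rfl
    | cons B t =>
        exfalso
        have hB : B ⊆ (∅ : Finset ℕ) := h3 ▸ subset_foldr_union (List.mem_cons_self)
        obtain ⟨a, ha⟩ := h1 B (List.mem_cons_self)
        exact absurd (hB ha) (Finset.notMem_empty a)
  · rintro rfl
    exact ⟨by simp, by simp, by simp, fun r hr => by simp at hr⟩

lemma isALOP_concat_iff {α : Finset ℕ} (hα : α.Nonempty) (L' : List (Finset ℕ))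
    (B : Finset ℕ) :
    IsALOP α (L' ++ [B]) ↔ B ⊆ α ∧ α.max' hα ∈ B ∧ IsALOP (α \ B) L' := by
  set mx := α.max' hα with hmx
  constructor
  · rintro ⟨h1, h2, h3, h4⟩
    rw [foldr_union_concat] at h3
    set U := L'.foldr (· ∪ ·) ∅ with hU
    have hBα : B ⊆ α := h3 ▸ Finset.subset_union_right
    have hdisj : ∀ C ∈ L', Disjoint C B := by
      rw [List.pairwise_append] at h2
      exact fun C hC => h2.2.2 C hC B (List.mem_singleton_self _)
    have hUB : Disjoint U B := disjoint_foldr_union hdisj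
    have hUeq : U = α \ B := by
      ext a
      simp only [Finset.mem_sdiff]
      constructor
      · intro ha
        exact ⟨h3 ▸ Finset.mem_union_left _ ha, Finset.disjoint_left.1 hUB ha⟩
      · rintro ⟨ha, hb⟩
        rcases Finset.mem_union.1 (h3 ▸ ha : a ∈ U ∪ B) with h | h
        · exact h
        · exact absurd h hb
    have hlen : L'.length < (L' ++ [B]).length := by simp
    obtain ⟨m, hmB, hm⟩ := h4 L'.length hlen
    have hgetB : (L' ++ [B]).get ⟨L'.length, hlen⟩ = B := by
      simp [List.get_eq_getElem]
    rw [hgetB] at hmB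
    have htake : (L' ++ [B]).take (L'.length + 1) = L' ++ [B] := by
      apply List.take_of_length_le
      simp
    rw [htake, foldr_union_concat, ← hU, hUeq, Finset.sdiff_union_of_subset hBα] at hm
    have hmmx : m = mx := by
      refine le_antisymm (Finset.le_max' _ _ (hBα hmB)) (hm mx (α.max'_mem hα))
    refine ⟨hBα, hmmx ▸ hmB, ?_, ?_, hUeq ▸ hU.symm ▸ rfl, ?_⟩
    · exact fun C hC => h1 C (List.mem_append_left _ hC)
    · exact (List.pairwise_append.1 h2).1
    · intro r hr
      have hr' : r < (L' ++ [B]).length := by simp; omega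
      obtain ⟨m, hmg, hm⟩ := h4 r hr'
      have hget : (L' ++ [B]).get ⟨r, hr'⟩ = L'.get ⟨r, hr⟩ := by
        simp [List.get_eq_getElem, List.getElem_append_left hr]
      have htk : (L' ++ [B]).take (r + 1) = L'.take (r + 1) := by
        rw [List.take_append_of_le_length (by omega)]
      rw [hget] at hmg
      rw [htk] at hm
      exact ⟨m, hmg, hm⟩
  · rintro ⟨hBα, hmxB, g1, g2, g3, g4⟩
    have hdisj : ∀ C ∈ L', Disjoint C B := by
      intro C hC
      have : C ⊆ α \ B := g3 ▸ subset_foldr_union hC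
      exact Finset.disjoint_left.2 fun a ha => (Finset.mem_sdiff.1 (this ha)).2
    refine ⟨?_, ?_, ?_, ?_⟩
    · intro C hC
      rcases List.mem_append.1 hC with h | h
      · exact g1 C h
      · rw [List.mem_singleton.1 h]; exact ⟨mx, hmxB⟩
    · exact List.pairwise_append.2 ⟨g2, List.pairwise_singleton _ _,
        fun C hC D hD => (List.mem_singleton.1 hD) ▸ hdisj C hC⟩
    · rw [foldr_union_concat, g3, Finset.sdiff_union_of_subset hBα]
    · intro r hr
      rcases lt_or_ge r L'.length with h | h
      · obtain ⟨m, hmg, hm⟩ := g4 r h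
        have hget : (L' ++ [B]).get ⟨r, hr⟩ = L'.get ⟨r, h⟩ := by
          simp [List.get_eq_getElem, List.getElem_append_left h]
        have htk : (L' ++ [B]).take (r + 1) = L'.take (r + 1) := by
          rw [List.take_append_of_le_length (by omega)]
        rw [hget, htk]
        exact ⟨m, hmg, hm⟩
      · have hr2 : r = L'.length := by simp at hr; omega
        subst hr2
        have hget : (L' ++ [B]).get ⟨L'.length, hr⟩ = B := by
          simp [List.get_eq_getElem]
        have htake : (L' ++ [B]).take (L'.length + 1) = L' ++ [B] := by
          apply List.take_of_length_le; simp
        rw [hget, htake, foldr_union_concat, g3, Finset.sdiff_union_of_subset hBα]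
        exact ⟨mx, hmxB, fun a ha => Finset.le_max' _ _ ha⟩

/-- Candidate last blocks: subsets of `α` containing the maximum. -/
noncomputable def lastBlocks (α : Finset ℕ) (hα : α.Nonempty) : Finset (Finset ℕ) :=
  α.powerset.filter (fun B => α.max' hα ∈ B)

/-- The finset of all anti-lexicographically ordered partitions of `α`. -/
noncomputable def alops (α : Finset ℕ) : Finset (List (Finset ℕ)) :=
  if hα : α.Nonempty then
    (lastBlocks α hα).attach.biUnion
      (fun B => (alops (α \ B.1)).image (fun L => L ++ [B.1]))
  else {[]}
termination_by α.card
decreasing_by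
  have hB := B.2
  simp only [lastBlocks, Finset.mem_filter, Finset.mem_powerset] at hB
  have h0 : B.1.Nonempty := ⟨_, hB.2⟩
  have h1 := Finset.card_sdiff_of_subset hB.1
  have h2 := Finset.card_pos.2 h0
  have h3 := Finset.card_le_card hB.1
  omega

lemma mem_alops {α : Finset ℕ} {L : List (Finset ℕ)} :
    L ∈ alops α ↔ IsALOP α L := by
  induction α using Finset.strongInductionOn generalizing L with
  | _ α ih =>
  by_cases hα : α.Nonempty
  · rw [alops, dif_pos hα]
    simp only [Finset.mem_biUnion, Finset.mem_attach, Finset.mem_image, true_and,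
      Subtype.exists]
    constructor
    · rintro ⟨B, hB, L', hL', rfl⟩
      simp only [lastBlocks, Finset.mem_filter, Finset.mem_powerset] at hB
      rw [isALOP_concat_iff hα]
      have hcard : α \ B ⊂ α :=
        Finset.sdiff_ssubset hB.1 ⟨_, hB.2⟩
      exact ⟨hB.1, hB.2, (ih _ hcard).1 hL'⟩
    · intro hL
      have hLne : L ≠ [] := by
        rintro rfl
        obtain ⟨-, -, h3, -⟩ := hL
        simp only [List.foldr_nil] at h3
        exact hα.ne_empty h3.symm
      obtain ⟨L', B, rfl⟩ : ∃ L' B, L = L' ++ [B] :=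
        ⟨L.dropLast, L.getLast hLne, (List.dropLast_concat_getLast hLne).symm⟩
      rw [isALOP_concat_iff hα] at hL
      obtain ⟨hBα, hmxB, hL'⟩ := hL
      have hcard : α \ B ⊂ α :=
        Finset.sdiff_ssubset hBα ⟨_, hmxB⟩
      exact ⟨B, by simp [lastBlocks, hBα, hmxB], L', (ih _ hcard).2 hL', rfl⟩
  · rw [Finset.not_nonempty_iff_eq_empty] at hα
    subst hα
    rw [alops, dif_neg (by simp), Finset.mem_singleton, isALOP_empty_iff]

/-! ### The counting argument -/

lemma card_lastBlocks_filter {α : Finset ℕ} (hα : α.Nonempty) (i : ℕ) (hi : 1 ≤ i) :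
    ((lastBlocks α hα).filter (fun B => B.card = i)).card
      = Nat.choose (α.card - 1) (i - 1) := by
  set mx := α.max' hα with hmx
  have hmxα : mx ∈ α := α.max'_mem hα
  rw [← Finset.card_erase_of_mem hmxα, ← Finset.card_powersetCard (i-1) (α.erase mx)]
  apply Finset.card_nbij' (i := fun B => B.erase mx) (j := fun s => insert mx s)
  · intro B hB
    simp only [Finset.mem_coe, lastBlocks, Finset.mem_filter, Finset.mem_powerset] at hB
    obtain ⟨⟨hBα, hmxB⟩, hcard⟩ := hB
    rw [Finset.mem_coe, Finset.mem_powersetCard]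
    exact ⟨Finset.erase_subset_erase _ hBα, by rw [Finset.card_erase_of_mem hmxB, hcard]⟩
  · intro s hs
    rw [Finset.mem_coe, Finset.mem_powersetCard] at hs
    obtain ⟨hsub, hcard⟩ := hs
    have hmxs : mx ∉ s := fun h => (Finset.mem_erase.1 (hsub h)).1 rfl
    simp only [Finset.mem_coe, lastBlocks, Finset.mem_filter, Finset.mem_powerset]
    refine ⟨⟨Finset.insert_subset hmxα (hsub.trans (Finset.erase_subset _ _)),
      Finset.mem_insert_self _ _⟩, ?_⟩
    rw [Finset.card_insert_of_notMem hmxs, hcard]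
    omega
  · intro B hB
    simp only [Finset.mem_coe, lastBlocks, Finset.mem_filter, Finset.mem_powerset] at hB
    exact Finset.insert_erase hB.1.2
  · intro s hs
    rw [Finset.mem_coe, Finset.mem_powersetCard] at hs
    have hmxs : mx ∉ s := fun h => (Finset.mem_erase.1 (hs.1 h)).1 rfl
    exact Finset.erase_insert hmxs

/-- The key combinatorial identity: summing any quantity depending only on the
list of block sizes over all ALOPs of `α` is the same as summing over all
compositions of `|α|`, weighted by `Ncoef`. -/
lemma main_sum {M : Type*} [AddCommMonoid M] (α : Finset ℕ) (H : List ℕ → M) :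
    ∑ L ∈ alops α, H (L.map Finset.card) = ∑ c ∈ compsF α.card, Ncoef c • H c := by
  induction α using Finset.strongInductionOn generalizing H with
  | _ α ih =>
  by_cases hα : α.Nonempty
  · set n := α.card with hn
    have hn1 : 1 ≤ n := Finset.card_pos.2 hα
    rw [alops, dif_pos hα]
    rw [Finset.sum_biUnion]
    swap
    · intro B hB B' hB' hne
      simp only [Function.onFun]
      rw [Finset.disjoint_left]
      intro L hL hL'
      simp only [Finset.mem_image] at hL hL'
      obtain ⟨L1, -, rfl⟩ := hL
      obtain ⟨L2, -, heq⟩ := hL'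
      apply hne
      have h2 := (List.append_inj' heq rfl).2
      simp only [List.cons.injEq, and_true] at h2
      exact Subtype.ext h2.symm
    · have step1 : ∀ B : {x // x ∈ lastBlocks α hα},
          ∑ L ∈ (alops (α \ B.1)).image (fun L => L ++ [B.1]), H (L.map Finset.card)
            = ∑ c ∈ compsF (n - B.1.card), Ncoef c • H (c ++ [B.1.card]) := by
        intro B
        have hB := B.2
        simp only [lastBlocks, Finset.mem_filter, Finset.mem_powerset] at hB
        have hBne : B.1.Nonempty := ⟨_, hB.2⟩
        rw [Finset.sum_image (by intro x _ y _ h; exact (List.append_inj' h rfl).1)]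
        have hss : α \ B.1 ⊂ α := Finset.sdiff_ssubset hB.1 hBne
        have hcard : (α \ B.1).card = n - B.1.card := by
          rw [Finset.card_sdiff_of_subset hB.1]
        calc ∑ L ∈ alops (α \ B.1), H ((L ++ [B.1]).map Finset.card)
            = ∑ L ∈ alops (α \ B.1), (fun l => H (l ++ [B.1.card])) (L.map Finset.card) := by
              apply Finset.sum_congr rfl
              intro L _
              simp
          _ = ∑ c ∈ compsF (n - B.1.card), Ncoef c • H (c ++ [B.1.card]) := by
              rw [← hcard]
              exact ih _ hss (fun l => H (l ++ [B.1.card]))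
      rw [Finset.sum_congr rfl (fun B _ => step1 B)]
      rw [Finset.sum_attach (lastBlocks α hα)
        (fun B => ∑ c ∈ compsF (n - B.card), Ncoef c • H (c ++ [B.card]))]
      rw [← Finset.sum_fiberwise_of_maps_to (g := Finset.card) (t := Finset.Icc 1 n)
        (by intro B hB
            simp only [lastBlocks, Finset.mem_filter, Finset.mem_powerset] at hB
            rw [Finset.mem_Icc]
            exact ⟨Finset.card_pos.2 ⟨_, hB.2⟩, Finset.card_le_card hB.1⟩)]
      rw [sum_compsF_succ n hn1]
      apply Finset.sum_congr rfl
      intro i hi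
      rw [Finset.mem_Icc] at hi
      have hfib : ∀ B ∈ (lastBlocks α hα).filter (fun B => B.card = i),
          (∑ c ∈ compsF (n - B.card), Ncoef c • H (c ++ [B.card]))
            = ∑ c ∈ compsF (n - i), Ncoef c • H (c ++ [i]) := by
        intro B hB
        rw [(Finset.mem_filter.1 hB).2]
      rw [Finset.sum_congr rfl hfib, Finset.sum_const, card_lastBlocks_filter hα i hi.1,
        Finset.smul_sum]
      apply Finset.sum_congr rfl
      intro c hc
      rw [mem_compsF] at hc
      rw [smul_smul, Ncoef_append, hc.2]
      have hni : n - i + i = n := by omega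
      rw [hni, hn]
  · rw [Finset.not_nonempty_iff_eq_empty] at hα
    subst hα
    rw [alops, dif_neg (by simp), Finset.card_empty, compsF_zero]
    simp [Ncoef]

lemma map_dropLast' {α β : Type*} (f : α → β) (L : List α) :
    (L.map f).dropLast = L.dropLast.map f := by
  induction L with
  | nil => rfl
  | cons a t ih =>
      cases t with
      | nil => rfl
      | cons b u =>
          simp only [List.map_cons, List.dropLast_cons₂] at ih ⊢
          rw [← List.map_cons (f := f) (a := b) (l := u)] at ih ⊢
          rw [ih]

lemma card_Icc_one (m : ℕ) : (Finset.Icc 1 m).card = m := by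
  rw [Nat.card_Icc]
  omega

/-! ### Lemmas about `extX`, `extF`, `Phi` -/

section Main

variable {R : Type*} [CommRing R] {𝔤 : Type*} [LieRing 𝔤] [LieAlgebra R 𝔤]

lemma extX_pos (k : ℕ) (x : Fin k → 𝔤) (n : ℕ) (h1 : 1 ≤ n) (h2 : n ≤ k) :
    extX k x n = x ⟨n - 1, by omega⟩ :=
  dif_pos ⟨h1, h2⟩

lemma extF_Phi (k : ℕ) (x : Fin k → 𝔤) {B : Finset ℕ} (hB : B ⊆ Finset.Icc 1 k) :
    extF k (Phi k x) B = extX k x B.card := by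
  by_cases h : B.Nonempty
  · rw [show extF k (Phi k x) B = Phi k x ⟨B, hB, h⟩ from dif_pos ⟨hB, h⟩]
    rfl
  · rw [Finset.not_nonempty_iff_eq_empty] at h
    subst h
    rw [show extF k (Phi k x) (∅ : Finset ℕ)
        = 0 from dif_neg (by simp), Finset.card_empty]
    rw [show extX k x 0 = 0 from dif_neg (by omega)]

lemma hom_part (k : ℕ) (x y : Fin k → 𝔤) :
    Phi k (jMul k x y) = tanMul k (Phi k x) (Phi k y) := by
  funext α
  obtain ⟨hsub, hne⟩ := α.2
  have hn1 : 1 ≤ α.1.card := Finset.card_pos.2 hne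
  have hnk : α.1.card ≤ k := by
    have := Finset.card_le_card hsub
    rwa [card_Icc_one] at this
  set n := α.1.card with hn
  have hL : Phi k (jMul k x y) α = jetZ (extX k x) (extX k y) n := by
    show extX k (jMul k x y) n = _
    rw [extX_pos k _ n hn1 hnk]
    show jetZ (extX k x) (extX k y) (n - 1 + 1) = _
    congr 1
    omega
  rw [hL]
  show _ = tanZ (extF k (Phi k x)) (extF k (Phi k y)) α.1
  rw [jetZ, tanZ]
  congr 1
  · -- the `x` term
    rw [extF_Phi k x hsub]
  · -- the sums
    set H : List ℕ → 𝔤 := fun l =>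
      l.dropLast.foldl (fun v i => ⁅extX k x i, v⁆) (extX k y (l.getLast?.getD 0))
      with hH
    set T : List (Finset ℕ) → 𝔤 := fun L =>
      L.dropLast.foldl (fun v B => ⁅extF k (Phi k x) B, v⁆)
        (extF k (Phi k y) (L.getLast?.getD ∅)) with hT
    have hfin : ∑ᶠ (L : List (Finset ℕ)) (_ : IsALOP α.1 L), T L
        = ∑ L ∈ alops α.1, T L := by
      rw [← finsum_mem_coe_finset]
      apply finsum_congr
      intro L
      exact finsum_congr_Prop
        (propext ⟨fun h => by simpa [Finset.mem_coe] using mem_alops.2 h,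
          fun h => mem_alops.1 (by simpa [Finset.mem_coe] using h)⟩)
        (fun _ => rfl)
    rw [hfin]
    have hterm : ∀ L ∈ alops α.1, T L = H (L.map Finset.card) := by
      intro L hL
      obtain ⟨h1, -, h3, -⟩ := mem_alops.1 hL
      have hmem : ∀ B ∈ L, B ⊆ Finset.Icc 1 k := by
        intro B hB
        refine (subset_foldr_union hB).trans ?_
        rw [h3]
        exact hsub
      have hLne : L ≠ [] := by
        rintro rfl
        simp only [List.foldr_nil] at h3
        exact hne.ne_empty h3.symm
      have hlastmem : L.getLast?.getD ∅ ∈ L := by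
        rw [List.getLast?_eq_getLast hLne]
        exact List.getLast_mem hLne
      have hinit : extF k (Phi k y) (L.getLast?.getD ∅)
          = extX k y ((L.map Finset.card).getLast?.getD 0) := by
        rw [extF_Phi k y (hmem _ hlastmem), List.getLast?_map]
        congr 1
        rw [List.getLast?_eq_getLast hLne]
        rfl
      rw [hT, hH]
      simp only
      rw [map_dropLast', List.foldl_map, ← hinit]
      apply List.foldl_ext
      intro a B hB
      rw [extF_Phi k x (hmem _ (List.mem_of_mem_dropLast hB))]
    rw [Finset.sum_congr rfl hterm, main_sum α.1 H]
    exact sum_compsF n (fun l => Ncoef l • H l)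

end Main

/-- `Φ(x)_α = x_{|α|}` is an injective group homomorphism from
`J_k(𝔤)` to `G_k(𝔤)` whose image is exactly the set of families constant on
cardinalities (the fixed point set of the `S_k`-action). -/
theorem stmt6 {R : Type*} [CommRing R] {𝔤 : Type*} [LieRing 𝔤] [LieAlgebra R 𝔤]
    (k : ℕ) (hk : 1 ≤ k) :
    Function.Injective (Phi (𝔤 := 𝔤) k) ∧
    (∀ x y : Fin k → 𝔤, Phi k (jMul k x y) = tanMul k (Phi k x) (Phi k y)) ∧
    Set.range (Phi (𝔤 := 𝔤) k)
      = {f : Ik k → 𝔤 | ∀ α β : Ik k, α.1.card = β.1.card → f α = f β} := by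
  refine ⟨?_, hom_part k, ?_⟩
  · -- injectivity
    intro x y h
    funext j
    have hαsub : Finset.Icc 1 (j.val + 1) ⊆ Finset.Icc 1 k :=
      Finset.Icc_subset_Icc_right (by omega)
    have hαne : (Finset.Icc 1 (j.val + 1)).Nonempty := Finset.nonempty_Icc.2 (by omega)
    have hthis := congrFun h (⟨Finset.Icc 1 (j.val + 1), hαsub, hαne⟩ : Ik k)
    simp only [Phi] at hthis
    rw [card_Icc_one] at hthis
    rw [extX_pos k x (j.val + 1) (by omega) (by omega),
      extX_pos k y (j.val + 1) (by omega) (by omega)] at hthis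
    have hj : (⟨j.val + 1 - 1, by omega⟩ : Fin k) = j := by
      ext; simp
    rwa [hj] at hthis
  · -- range characterization
    ext f
    constructor
    · rintro ⟨x, rfl⟩ α β hcard
      show extX k x α.1.card = extX k x β.1.card
      rw [hcard]
    · intro hf
      have hx : ∀ j : Fin k, (Finset.Icc 1 (j.val + 1) ⊆ Finset.Icc 1 k ∧
          (Finset.Icc 1 (j.val + 1)).Nonempty) := fun j =>
        ⟨Finset.Icc_subset_Icc_right (by omega), Finset.nonempty_Icc.2 (by omega)⟩
      refine ⟨fun j => f ⟨Finset.Icc 1 (j.val + 1), hx j⟩, ?_⟩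
      funext α
      obtain ⟨hsub, hne⟩ := α.2
      have hn1 : 1 ≤ α.1.card := Finset.card_pos.2 hne
      have hnk : α.1.card ≤ k := by
        have := Finset.card_le_card hsub
        rwa [card_Icc_one] at this
      show extX k _ α.1.card = f α
      rw [extX_pos k _ α.1.card hn1 hnk]
      apply hf
      rw [card_Icc_one]
      dsimp only
      omega
end

section
/- In J_k(𝔤), let 1 ≤ i < j ≤ k and x, y ∈ 𝔤, let a ∈ 𝔤^k be the pure element with x in slot i and 0 elsewhere, and let b be the pure element with y in slot j and 0 elsewhere. Then the product a·b has component x in slot i, component ((m·i + j − 1)! / (m! · (i!)^m · (j−1)!)) · ad_x^m y in slot m·i + j for each m ≥ 0 with m·i + j ≤ k (in particular y in slot j), and 0 in every other slot. -/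
section Aux

lemma Ncoef_single (a : ℕ) : Ncoef [a] = 1 := by rw [Ncoef]

lemma Ncoef_cons_cons (a b : ℕ) (rest : List ℕ) :
    Ncoef (a :: b :: rest) = (a + b - 1).choose (b-1) * Ncoef ((a+b) :: rest) := by
  rw [Ncoef]

lemma ncoef_key (i j : ℕ) (hi : 1 ≤ i) (hj : 1 ≤ j) : ∀ (m a : ℕ), 1 ≤ a →
    (Nat.factorial (i-1))^m * ((Finset.range m).prod (fun s => a + (s+1)*i)) *
      a.factorial * (j-1).factorial * Ncoef (a :: (List.replicate m i ++ [j]))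
    = (a + m*i + j - 1).factorial := by
  intro m
  induction m with
  | zero =>
    intro a ha
    simp only [List.replicate, List.nil_append, Finset.range_zero, Finset.prod_empty,
      pow_zero, one_mul, mul_one, zero_mul, add_zero]
    rw [Ncoef_cons_cons, Ncoef_single, mul_one]
    have h := Nat.choose_mul_factorial_mul_factorial (n := a + j - 1) (k := j - 1) (by omega)
    have h2 : a + j - 1 - (j-1) = a := by omega
    rw [h2] at h
    calc a.factorial * (j-1).factorial * (a + j - 1).choose (j-1)
        = (a + j - 1).choose (j-1) * (j-1).factorial * a.factorial := by ring
      _ = (a + j - 1).factorial := h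
  | succ m ih =>
    intro a ha
    have hrep : (a :: (List.replicate (m+1) i ++ [j])) =
        a :: i :: (List.replicate m i ++ [j]) := by
      rw [List.replicate_succ]; rfl
    have hN : Ncoef (a :: (List.replicate (m+1) i ++ [j])) =
        (a + i - 1).choose (i-1) * Ncoef ((a+i) :: (List.replicate m i ++ [j])) := by
      rw [hrep, Ncoef_cons_cons]
    have hprod : (Finset.range (m+1)).prod (fun s => a + (s+1)*i) =
        ((Finset.range m).prod (fun s => (a+i) + (s+1)*i)) * (a + i) := by
      rw [Finset.prod_range_succ' (fun s => a + (s+1)*i) m]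
      congr 1
      · apply Finset.prod_congr rfl; intro s _; ring
      · ring
    have hchoose : (a + i - 1).choose (i-1) * ((i-1).factorial) * (a.factorial * (a+i))
        = (a+i).factorial := by
      have h := Nat.choose_mul_factorial_mul_factorial (n := a + i - 1) (k := i - 1) (by omega)
      have h2 : a + i - 1 - (i-1) = a := by omega
      rw [h2] at h
      have h3 : (a+i) * (a + i - 1).factorial = (a+i).factorial :=
        Nat.mul_factorial_pred (by omega)
      calc (a + i - 1).choose (i-1) * ((i-1).factorial) * (a.factorial * (a+i))
          = (a+i) * ((a + i - 1).choose (i-1) * (i-1).factorial * a.factorial) := by ring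
        _ = (a+i) * (a + i - 1).factorial := by rw [h]
        _ = (a+i).factorial := h3
    have key := ih (a + i) (by omega)
    rw [hN, hprod, pow_succ]
    calc (i-1).factorial ^ m * (i-1).factorial *
          ((Finset.range m).prod (fun s => (a+i) + (s+1)*i) * (a + i)) *
          a.factorial * (j-1).factorial *
          ((a + i - 1).choose (i-1) * Ncoef ((a+i) :: (List.replicate m i ++ [j])))
        = ((a + i - 1).choose (i-1) * ((i-1).factorial) * (a.factorial * (a+i))) *
          ((i-1).factorial ^ m * ((Finset.range m).prod (fun s => (a+i) + (s+1)*i)) *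
            (j-1).factorial * Ncoef ((a+i) :: (List.replicate m i ++ [j]))) := by ring
      _ = (a+i).factorial * ((i-1).factorial ^ m *
            ((Finset.range m).prod (fun s => (a+i) + (s+1)*i)) *
            (j-1).factorial * Ncoef ((a+i) :: (List.replicate m i ++ [j]))) := by rw [hchoose]
      _ = (i-1).factorial ^ m * ((Finset.range m).prod (fun s => (a+i) + (s+1)*i)) *
            (a+i).factorial * (j-1).factorial *
            Ncoef ((a+i) :: (List.replicate m i ++ [j])) := by ring
      _ = (a + i + m*i + j - 1).factorial := key
      _ = (a + (m+1)*i + j - 1).factorial := by rw [show a+i+m*i = a+(m+1)*i by ring]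

lemma ncoef_replicate (i j : ℕ) (hi : 1 ≤ i) (hj : 1 ≤ j) (M : ℕ) :
    Ncoef (List.replicate M i ++ [j]) *
      (M.factorial * (i.factorial)^M * (j-1).factorial) = (M*i + j - 1).factorial := by
  cases M with
  | zero =>
    simp [Ncoef_single]
  | succ m =>
    have key := ncoef_key i j hi hj m i hi
    have hprod : ∀ p : ℕ, (Finset.range p).prod (fun s => i + (s+1)*i)
        = i^p * (p+1).factorial := by
      intro p
      induction p with
      | zero => simp
      | succ p ihp =>
        rw [Finset.prod_range_succ, ihp, pow_succ, Nat.factorial_succ (p+1)]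
        ring
    rw [hprod m] at key
    have hfac : (m+1).factorial * (i.factorial)^(m+1) =
        (i-1).factorial ^ m * (i^m * (m+1).factorial) * i.factorial := by
      have : (i.factorial)^m = (i-1).factorial^m * i^m := by
        rw [← Nat.mul_factorial_pred (by omega : i ≠ 0)]
        rw [mul_pow]; ring
      rw [pow_succ, this]; ring
    have hl : List.replicate (m+1) i ++ [j] = i :: (List.replicate m i ++ [j]) := by
      rw [List.replicate_succ]; rfl
    rw [hl]
    calc Ncoef (i :: (List.replicate m i ++ [j])) *
          ((m+1).factorial * i.factorial ^ (m+1) * (j-1).factorial)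
        = (i-1).factorial ^ m * (i^m * (m+1).factorial) * i.factorial * (j-1).factorial *
            Ncoef (i :: (List.replicate m i ++ [j])) := by rw [hfac]; ring
      _ = (i + m*i + j - 1).factorial := key
      _ = ((m+1)*i + j - 1).factorial := by rw [show i+m*i = (m+1)*i by ring]

variable {𝔤 : Type*} [LieRing 𝔤]

lemma foldl_lie_zero (X : ℕ → 𝔤) (L : List ℕ) :
    L.foldl (fun (v : 𝔤) (b : ℕ) => ⁅X b, v⁆) 0 = 0 := by
  induction L with
  | nil => rfl
  | cons a L ih => rw [List.foldl_cons, lie_zero]; exact ih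

lemma foldl_lie_eq_zero_of_mem (X : ℕ → 𝔤) {L : List ℕ} {b : ℕ} (hb : b ∈ L)
    (hX : X b = 0) (v : 𝔤) : L.foldl (fun (v : 𝔤) (b : ℕ) => ⁅X b, v⁆) v = 0 := by
  induction L generalizing v with
  | nil => cases hb
  | cons a L ih =>
    by_cases h : X a = 0
    · rw [List.foldl_cons, h, zero_lie]; exact foldl_lie_zero X L
    · rcases List.mem_cons.mp hb with rfl | hb'
      · exact absurd hX h
      · exact ih hb' _

lemma foldl_lie_replicate (X : ℕ → 𝔤) (i m : ℕ) (v : 𝔤) :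
    (List.replicate m i).foldl (fun (v : 𝔤) (b : ℕ) => ⁅X b, v⁆) v
      = (fun w => ⁅X i, w⁆)^[m] v := by
  induction m generalizing v with
  | zero => rfl
  | succ m ih =>
    rw [List.replicate_succ, List.foldl_cons, ih, ← Function.iterate_succ_apply]

end Aux

/-- in `J_k(𝔤)`, for `1 ≤ i < j ≤ k`, the product of the pure element with
`x` in slot `i` and the pure element with `y` in slot `j` has `x` in slot `i`,
`((m·i + j − 1)! / (m!·(i!)^m·(j−1)!)) • ad_x^m y` in slot `m·i + j` for every `m ≥ 0`
with `m·i + j ≤ k`, and `0` in every other slot.  (A slot `n = l.val + 1` is of the form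
`m·i + j` iff `j ≤ n` and `i ∣ n − j`, with `m = (n − j)/i`; then `m·i + j − 1 = l.val`.) -/
theorem stmt9 {R : Type*} [CommRing R] {𝔤 : Type*} [LieRing 𝔤] [LieAlgebra R 𝔤]
    (k : ℕ) (hk : 1 ≤ k) (i j : ℕ) (hi : 1 ≤ i) (hij : i < j) (hjk : j ≤ k) (x y : 𝔤) :
    jMul k (fun l : Fin k => if l.val + 1 = i then x else 0)
           (fun l : Fin k => if l.val + 1 = j then y else 0)
      = fun l : Fin k =>
          if l.val + 1 = i then x
          else if j ≤ l.val + 1 ∧ (l.val + 1 - j) % i = 0 then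
            (Nat.factorial l.val /
                (Nat.factorial ((l.val + 1 - j) / i) *
                  Nat.factorial i ^ ((l.val + 1 - j) / i) * Nat.factorial (j - 1))) •
              (fun v => ⁅x, v⁆)^[(l.val + 1 - j) / i] y
          else 0 := by
  funext l
  set n : ℕ := l.val + 1 with hn
  have hn1 : 1 ≤ n := by omega
  have hnk : n ≤ k := by omega
  set X : ℕ → 𝔤 := extX k (fun l : Fin k => if l.val + 1 = i then x else 0) with hXdef
  set Y : ℕ → 𝔤 := extX k (fun l : Fin k => if l.val + 1 = j then y else 0) with hYdef
  have hXval : ∀ b : ℕ, X b = if b = i then x else 0 := by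
    intro b
    rw [hXdef]; unfold extX
    by_cases h : 1 ≤ b ∧ b ≤ k
    · rw [dif_pos h]
      have : b - 1 + 1 = b := by omega
      simp only [this]
    · rw [dif_neg h, if_neg (by omega)]
  have hYval : ∀ b : ℕ, Y b = if b = j then y else 0 := by
    intro b
    rw [hYdef]; unfold extX
    by_cases h : 1 ≤ b ∧ b ≤ k
    · rw [dif_pos h]
      have : b - 1 + 1 = b := by omega
      simp only [this]
    · rw [dif_neg h, if_neg (by omega)]
  have term_zero : ∀ c : Composition n, (∀ m : ℕ, c.blocks ≠ List.replicate m i ++ [j]) →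
      Ncoef c.blocks •
        (c.blocks.dropLast.foldl (fun (v : 𝔤) (b : ℕ) => ⁅X b, v⁆)
          (Y (c.blocks.getLast?.getD 0))) = 0 := by
    intro c hc
    have hne : c.blocks ≠ [] := by
      intro h
      have hs := c.blocks_sum
      rw [h] at hs
      simp at hs
    by_cases hlast : c.blocks.getLast hne = j
    · by_cases hall : ∀ b ∈ c.blocks.dropLast, b = i
      · exfalso
        apply hc c.blocks.dropLast.length
        have hdl : c.blocks.dropLast = List.replicate c.blocks.dropLast.length i :=
          List.eq_replicate_iff.mpr ⟨rfl, hall⟩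
        conv_lhs => rw [← List.dropLast_append_getLast hne]
        rw [hlast, ← hdl]
      · push_neg at hall
        obtain ⟨b, hb, hbne⟩ := hall
        have hXb : X b = 0 := by rw [hXval b]; exact if_neg hbne
        rw [foldl_lie_eq_zero_of_mem X hb hXb, smul_zero]
    · have hY0 : Y (c.blocks.getLast?.getD 0) = 0 := by
        rw [List.getLast?_eq_getLast hne]
        simp only [Option.getD_some]
        rw [hYval]; exact if_neg hlast
      rw [hY0, foldl_lie_zero, smul_zero]
  show jetZ X Y n = _
  unfold jetZ
  by_cases hgood : j ≤ n ∧ (n - j) % i = 0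
  · -- slot of the form m*i + j
    set m : ℕ := (n - j) / i with hm
    have hmn : m * i + j = n := by
      have h2 : (n-j)/i * i = n - j := Nat.div_mul_cancel (Nat.dvd_of_mod_eq_zero hgood.2)
      rw [hm, h2]
      omega
    have hblocks_pos : ∀ b ∈ List.replicate m i ++ [j], 0 < b := by
      intro b hb
      rcases List.mem_append.mp hb with h | h
      · rw [List.eq_of_mem_replicate h]; omega
      · simp at h; omega
    have hblocks_sum : (List.replicate m i ++ [j]).sum = n := by
      rw [List.sum_append, List.sum_replicate, List.sum_cons, List.sum_nil, smul_eq_mul]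
      omega
    set c₀ : Composition n := ⟨List.replicate m i ++ [j], fun {b} hb => hblocks_pos b hb, hblocks_sum⟩ with hc₀
    have hsum : (∑ c : Composition n,
        Ncoef c.blocks •
          (c.blocks.dropLast.foldl (fun (v : 𝔤) (b : ℕ) => ⁅X b, v⁆)
            (Y (c.blocks.getLast?.getD 0))))
        = Ncoef c₀.blocks •
          (c₀.blocks.dropLast.foldl (fun (v : 𝔤) (b : ℕ) => ⁅X b, v⁆)
            (Y (c₀.blocks.getLast?.getD 0))) := by
      apply Fintype.sum_eq_single c₀
      intro c hcne
      apply term_zero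
      intro m' hm'
      apply hcne
      have hsum' : (List.replicate m' i ++ [j]).sum = n := by rw [← hm']; exact c.blocks_sum
      rw [List.sum_append, List.sum_replicate, List.sum_cons, List.sum_nil, smul_eq_mul] at hsum'
      have hmm : m' = m := by
        have : m' * i = m * i := by omega
        exact Nat.eq_of_mul_eq_mul_right (by omega) this
      ext1
      rw [hm', hmm]
    rw [hsum]
    have hb0 : c₀.blocks = List.replicate m i ++ [j] := rfl
    have hterm : Ncoef c₀.blocks •
        (c₀.blocks.dropLast.foldl (fun (v : 𝔤) (b : ℕ) => ⁅X b, v⁆)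
          (Y (c₀.blocks.getLast?.getD 0)))
        = Ncoef (List.replicate m i ++ [j]) • (fun v => ⁅x, v⁆)^[m] y := by
      rw [hb0, List.dropLast_concat, List.getLast?_concat]
      simp only [Option.getD_some]
      rw [hYval j, if_pos rfl, foldl_lie_replicate]
      have hXi : X i = x := by rw [hXval i, if_pos rfl]
      rw [hXi]
    rw [hterm]
    have hXn : X n = 0 := by rw [hXval n]; exact if_neg (by omega)
    rw [hXn, zero_add]
    rw [if_neg (show ¬ (l.val + 1 = i) by omega), if_pos hgood]
    have hcoef : l.val.factorial /
        (m.factorial * i.factorial ^ m * (j-1).factorial)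
        = Ncoef (List.replicate m i ++ [j]) := by
      have hD : 0 < m.factorial * i.factorial ^ m * (j-1).factorial :=
        Nat.mul_pos (Nat.mul_pos (Nat.factorial_pos _) (Nat.pow_pos (Nat.factorial_pos _)))
          (Nat.factorial_pos _)
      apply Nat.div_eq_of_eq_mul_left hD
      have := ncoef_replicate i j hi (by omega) m
      rw [show m * i + j - 1 = l.val by omega] at this
      exact this.symm
    rw [hcoef]
  · -- other slots: the sum vanishes
    have hsum : (∑ c : Composition n,
        Ncoef c.blocks •
          (c.blocks.dropLast.foldl (fun (v : 𝔤) (b : ℕ) => ⁅X b, v⁆)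
            (Y (c.blocks.getLast?.getD 0)))) = 0 := by
      apply Finset.sum_eq_zero
      intro c _
      apply term_zero
      intro m' hm'
      apply hgood
      have hsum' : (List.replicate m' i ++ [j]).sum = n := by rw [← hm']; exact c.blocks_sum
      rw [List.sum_append, List.sum_replicate, List.sum_cons, List.sum_nil, smul_eq_mul] at hsum'
      constructor
      · omega
      · have : n - j = m' * i := by omega
        rw [this]
        exact Nat.mul_mod_left m' i
    rw [hsum, add_zero, hXval n]
    by_cases hni : n = i
    · rw [if_pos hni, if_pos (show l.val + 1 = i from hni)]
    · rw [if_neg hni, if_neg (show ¬ (l.val + 1 = i) from hni),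
        if_neg (show ¬ (j ≤ l.val + 1 ∧ (l.val + 1 - j) % i = 0) from hgood)]
end
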